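/- Let M = (S, A, Ψ, R, p), M̃ and M' = (S', A', Ψ', R', p') be MDPs with the same discount factor γ ∈ [0,1). Suppose M̃ is a relabeled variant of M via a relabeling h = (f, {g_s}_{s∈S}), M̃ and M' have the same transition structure and Π_*(M̃) = Π_*(M'), and ~ = (~_{S'}, ~_{Ψ'}) is a visible symmetry of M' (so (M', ~) is a hidden symmetry of M). For a policy π in the quotient MDP M'/~ define π'(s,a) := π([(f(s), g_s(a))]_{Ψ'}) / N_{Ψ'}(f(s), g_s(a)) for all (s,a) ∈ Ψ. Then π' is a policy in M, and if π is optimal in M'/~ then π' is optimal in M. Moreover, if ~ is simple then π'(s,a) = π(g_s(a) | [f(s)]). -/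

import Mathlib

/-- A Markov decision process with state type `S`, action type `A` and reward-label
type `Rw` (the countable bounded reward set is the image of `rval`).  `adm s` is the
finite nonempty set of admissible actions in state `s`, and `p s' r s a` is the
probability of moving to state `s'` receiving the reward labelled `r` when taking
action `a` in state `s` (the dynamic is extended by `0` off the admissible pairs). -/
structure MDP (S A Rw : Type*) where
  adm : S → Finset A
  adm_nonempty : ∀ s, (adm s).Nonempty
  rval : Rw → ℝ
  rval_bdd : ∃ C : ℝ, ∀ r, |rval r| ≤ C
  p : S → Rw → S → A → ℝ
  p_nonneg : ∀ s' r s a, 0 ≤ p s' r s a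
  p_adm : ∀ s a, a ∉ adm s → ∀ s' r, p s' r s a = 0
  p_sum : ∀ s a, a ∈ adm s → (∑' x : S × Rw, p x.1 x.2 s a) = 1

namespace MDP

variable {S A Rw S' A' Rw' : Type*}

/-- A policy: a probability distribution over the admissible actions in each state
(extended by `0` off the admissible pairs). -/
def IsPolicy (M : MDP S A Rw) (π : S → A → ℝ) : Prop :=
  (∀ s a, 0 ≤ π s a) ∧ (∀ s a, a ∉ M.adm s → π s a = 0) ∧
    ∀ s, ∑ a ∈ M.adm s, π s a = 1

/-- `stepReward M π k s` is the expected reward `E_{π,p}[R_{k+1} | S_0 = s]`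
received at step `k` of the trajectory generated by the policy `π` started at `s`. -/
noncomputable def stepReward (M : MDP S A Rw) (π : S → A → ℝ) : ℕ → S → ℝ
  | 0, s => ∑ a ∈ M.adm s, π s a * ∑' x : S × Rw, M.p x.1 x.2 s a * M.rval x.2
  | k + 1, s => ∑ a ∈ M.adm s, π s a *
      ∑' s' : S, (∑' r : Rw, M.p s' r s a) * M.stepReward π k s'

/-- The value function `V_π(s) = E_{π,p}[∑_k γ^k R_{k+1} | S_0 = s]`. -/
noncomputable def value (M : MDP S A Rw) (γ : ℝ) (π : S → A → ℝ) (s : S) : ℝ :=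
  ∑' k : ℕ, γ ^ k * M.stepReward π k s

/-- The optimal value function `V_*(s) = sup_π V_π(s)`. -/
noncomputable def optValue (M : MDP S A Rw) (γ : ℝ) (s : S) : ℝ :=
  ⨆ π : {π : S → A → ℝ // M.IsPolicy π}, M.value γ π.1 s

/-- A policy is optimal if its value function coincides with the optimal value
function in every state. -/
def IsOptimal (M : MDP S A Rw) (γ : ℝ) (π : S → A → ℝ) : Prop :=
  M.IsPolicy π ∧ ∀ s, M.value γ π s = M.optValue γ s

/-- The set `Ψ` of admissible state-action pairs, as a type. -/
abbrev Pairs (M : MDP S A Rw) : Type _ := {q : S × A // q.2 ∈ M.adm q.1}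

/-- A visible symmetry of an MDP: an equivalence relation `eqS` on states together
with an equivalence relation `eqP` on admissible state-action pairs such that
related pairs have related states, any admissible pair can be transported to any
state related to its own, and related pairs have the same dynamic on
`eqS`-equivalence classes. -/
structure VisibleSymmetry (M : MDP S A Rw) where
  eqS : Setoid S
  eqP : Setoid M.Pairs
  lift_action : ∀ (q : M.Pairs) (s2 : S), eqS.r q.1.1 s2 →
    ∃ (a2 : A) (h2 : a2 ∈ M.adm s2), eqP.r q ⟨(s2, a2), h2⟩
  rel_states : ∀ q1 q2 : M.Pairs, eqP.r q1 q2 → eqS.r q1.1.1 q2.1.1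
  rel_dyn : ∀ q1 q2 : M.Pairs, eqP.r q1 q2 → ∀ (s' : S) (r : Rw),
    (∑' x : {x : S // eqS.r x s'}, M.p x.1 r q1.1.1 q1.1.2) =
      ∑' x : {x : S // eqS.r x s'}, M.p x.1 r q2.1.1 q2.1.2

/-- A visible symmetry is simple if related state-action pairs carry the same action. -/
def VisibleSymmetry.Simple {M : MDP S A Rw} (V : M.VisibleSymmetry) : Prop :=
  ∀ q1 q2 : M.Pairs, V.eqP.r q1 q2 → q1.1.2 = q2.1.2

/-- `N_Ψ(s,a)`: the number of admissible actions in `s` whose pair with `s` is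
`eqP`-equivalent to `(s,a)`. -/
noncomputable def VisibleSymmetry.N {M : MDP S A Rw} (V : M.VisibleSymmetry)
    (s : S) (a : A) (h : a ∈ M.adm s) : ℕ :=
  Set.ncard {a' : A | ∃ h' : a' ∈ M.adm s, V.eqP.r ⟨(s, a), h⟩ ⟨(s, a'), h'⟩}

/-- A relabeling of the MDP `M` to the MDP `M'`: a bijection `f` on states and, for each
state `s`, a bijection `g s` from the admissible actions of `s` to those of `f s`,
which together transport the dynamic of `M` to that of `M'`. -/
structure Relabeling (M : MDP S A Rw) (M' : MDP S' A' Rw) where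
  f : S → S'
  g : S → A → A'
  f_bij : Function.Bijective f
  g_bij : ∀ s : S, Set.BijOn (g s) (M.adm s : Set A) (M'.adm (f s) : Set A')
  rval_eq : ∀ r : Rw, M'.rval r = M.rval r
  dyn : ∀ (s : S) (a : A), a ∈ M.adm s → ∀ (st : S) (r : Rw),
    M.p st r s a = M'.p (f st) r (f s) (g s a)

end MDP
namespace MDP

open Finset

variable {S A Rw : Type*}

/-- State-transition kernel. -/
noncomputable def P (N : MDP S A Rw) (s : S) (a : A) (s' : S) : ℝ := ∑' r : Rw, N.p s' r s a

/-- Expected one-step reward. -/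
noncomputable def rew (N : MDP S A Rw) (s : S) (a : A) : ℝ :=
  ∑' x : S × Rw, N.p x.1 x.2 s a * N.rval x.2

lemma stepReward_zero (N : MDP S A Rw) (π : S → A → ℝ) (s : S) :
    N.stepReward π 0 s = ∑ a ∈ N.adm s, π s a * N.rew s a := rfl

lemma stepReward_succ (N : MDP S A Rw) (π : S → A → ℝ) (k : ℕ) (s : S) :
    N.stepReward π (k+1) s
      = ∑ a ∈ N.adm s, π s a * ∑' s', N.P s a s' * N.stepReward π k s' := rfl

variable (N : MDP S A Rw)

lemma summable_p {s : S} {a : A} (ha : a ∈ N.adm s) :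
    Summable fun x : S × Rw => N.p x.1 x.2 s a := by
  by_contra h
  have h0 := tsum_eq_zero_of_not_summable h
  rw [N.p_sum s a ha] at h0
  norm_num at h0

lemma P_nonneg (s : S) (a : A) (s' : S) : 0 ≤ N.P s a s' :=
  tsum_nonneg fun r => N.p_nonneg _ _ _ _

lemma summable_P {s : S} {a : A} (ha : a ∈ N.adm s) : Summable (N.P s a) :=
  (((summable_prod_of_nonneg (fun x => N.p_nonneg x.1 x.2 s a)).1 (N.summable_p ha)).2)

lemma tsum_P {s : S} {a : A} (ha : a ∈ N.adm s) : ∑' s', N.P s a s' = 1 := by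
  rw [← N.p_sum s a ha, Summable.tsum_prod (N.summable_p ha)]; rfl

/-- A fixed nonnegative bound for the rewards. -/
noncomputable def Cb : ℝ := max (Classical.choose N.rval_bdd) 0

lemma Cb_nonneg : 0 ≤ N.Cb := le_max_right _ _

lemma abs_rval_le (r : Rw) : |N.rval r| ≤ N.Cb :=
  (Classical.choose_spec N.rval_bdd r).trans (le_max_left _ _)

lemma summable_p_mul {s : S} {a : A} (ha : a ∈ N.adm s) (u : S × Rw → ℝ) (K : ℝ)
    (hu : ∀ x, |u x| ≤ K) : Summable fun x : S × Rw => N.p x.1 x.2 s a * u x := by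
  refine Summable.of_norm_bounded (g := fun x => N.p x.1 x.2 s a * K)
    ((N.summable_p ha).mul_right K) fun x => ?_
  rw [Real.norm_eq_abs, abs_mul, abs_of_nonneg (N.p_nonneg _ _ _ _)]
  exact mul_le_mul_of_nonneg_left (hu x) (N.p_nonneg _ _ _ _)

lemma abs_tsum_le_of {ι : Type*} (f g : ι → ℝ) (hg : Summable g) (h : ∀ i, |f i| ≤ g i) :
    |∑' i, f i| ≤ ∑' i, g i := by
  have habs : Summable fun i => |f i| :=
    Summable.of_nonneg_of_le (fun i => abs_nonneg _) h hg
  rw [← Real.norm_eq_abs]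
  calc ‖∑' i, f i‖ ≤ ∑' i, ‖f i‖ := norm_tsum_le_tsum_norm (by simpa [Real.norm_eq_abs] using habs)
    _ = ∑' i, |f i| := by simp [Real.norm_eq_abs]
    _ ≤ ∑' i, g i := Summable.tsum_le_tsum h habs hg

lemma abs_rew_le (s : S) (a : A) : |N.rew s a| ≤ N.Cb := by
  by_cases ha : a ∈ N.adm s
  · have h1 : |N.rew s a| ≤ ∑' x : S × Rw, N.p x.1 x.2 s a * N.Cb := by
      refine abs_tsum_le_of _ _ ((N.summable_p ha).mul_right _) fun x => ?_
      rw [abs_mul, abs_of_nonneg (N.p_nonneg _ _ _ _)]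
      exact mul_le_mul_of_nonneg_left (N.abs_rval_le x.2) (N.p_nonneg _ _ _ _)
    calc |N.rew s a| ≤ ∑' x : S × Rw, N.p x.1 x.2 s a * N.Cb := h1
      _ = N.Cb := by rw [tsum_mul_right, N.p_sum s a ha, one_mul]
  · have : N.rew s a = 0 := by
      unfold rew
      have hz : ∀ x : S × Rw, N.p x.1 x.2 s a * N.rval x.2 = (0:ℝ) := fun x => by
        rw [N.p_adm s a ha x.1 x.2, zero_mul]
      rw [tsum_congr hz, tsum_zero]
    rw [this, abs_zero]; exact N.Cb_nonneg

lemma summable_P_mul {s : S} {a : A} (ha : a ∈ N.adm s) (u : S → ℝ) (K : ℝ)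
    (hu : ∀ s', |u s'| ≤ K) : Summable fun s' => N.P s a s' * u s' := by
  refine Summable.of_norm_bounded (g := fun s' => N.P s a s' * K)
    ((N.summable_P ha).mul_right K) fun s' => ?_
  rw [Real.norm_eq_abs, abs_mul, abs_of_nonneg (N.P_nonneg _ _ _)]
  exact mul_le_mul_of_nonneg_left (hu s') (N.P_nonneg _ _ _)

lemma abs_tsum_P_mul_le {s : S} {a : A} (ha : a ∈ N.adm s) (u : S → ℝ) (K : ℝ)
    (hu : ∀ s', |u s'| ≤ K) : |∑' s', N.P s a s' * u s'| ≤ K := by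
  have h1 : |∑' s', N.P s a s' * u s'| ≤ ∑' s', N.P s a s' * K := by
    refine abs_tsum_le_of _ _ ((N.summable_P ha).mul_right _) fun s' => ?_
    rw [abs_mul, abs_of_nonneg (N.P_nonneg _ _ _)]
    exact mul_le_mul_of_nonneg_left (hu s') (N.P_nonneg _ _ _)
  calc |∑' s', N.P s a s' * u s'| ≤ ∑' s', N.P s a s' * K := h1
    _ = K := by rw [tsum_mul_right, N.tsum_P ha, one_mul]

lemma tsum_P_mul_add {s : S} {a : A} (ha : a ∈ N.adm s) (u : S → ℝ) (K : ℝ)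
    (hu : ∀ s', |u s'| ≤ K) (c : ℝ) :
    ∑' s', N.P s a s' * (u s' + c) = (∑' s', N.P s a s' * u s') + c := by
  have h1 := N.summable_P_mul ha u K hu
  have h2 := (N.summable_P ha).mul_right c
  calc ∑' s', N.P s a s' * (u s' + c)
      = ∑' s', (N.P s a s' * u s' + N.P s a s' * c) := by simp [mul_add]
    _ = (∑' s', N.P s a s' * u s') + ∑' s', N.P s a s' * c := Summable.tsum_add h1 h2
    _ = (∑' s', N.P s a s' * u s') + c := by rw [tsum_mul_right, N.tsum_P ha, one_mul]

lemma sum_pol_mul_add {π : S → A → ℝ} (hπ : N.IsPolicy π) (s : S) (F : A → ℝ) (c : ℝ) :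
    ∑ a ∈ N.adm s, π s a * (F a + c) = (∑ a ∈ N.adm s, π s a * F a) + c := by
  simp only [mul_add, Finset.sum_add_distrib, ← Finset.sum_mul, hπ.2.2 s, one_mul]

lemma sum_pol_le {π : S → A → ℝ} (hπ : N.IsPolicy π) (s : S) (F : A → ℝ) (K : ℝ)
    (hF : ∀ a ∈ N.adm s, F a ≤ K) : ∑ a ∈ N.adm s, π s a * F a ≤ K := by
  calc ∑ a ∈ N.adm s, π s a * F a ≤ ∑ a ∈ N.adm s, π s a * K :=
        Finset.sum_le_sum fun a haa => mul_le_mul_of_nonneg_left (hF a haa) (hπ.1 s a)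
    _ = K := by rw [← Finset.sum_mul, hπ.2.2 s, one_mul]

lemma abs_sum_pol_le {π : S → A → ℝ} (hπ : N.IsPolicy π) (s : S) (F : A → ℝ) (K : ℝ)
    (hF : ∀ a ∈ N.adm s, |F a| ≤ K) : |∑ a ∈ N.adm s, π s a * F a| ≤ K := by
  calc |∑ a ∈ N.adm s, π s a * F a| ≤ ∑ a ∈ N.adm s, |π s a * F a| :=
        Finset.abs_sum_le_sum_abs _ _
    _ ≤ ∑ a ∈ N.adm s, π s a * K := Finset.sum_le_sum fun a ha => by
        rw [abs_mul, abs_of_nonneg (hπ.1 s a)]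
        exact mul_le_mul_of_nonneg_left (hF a ha) (hπ.1 s a)
    _ = K := by rw [← Finset.sum_mul, hπ.2.2 s, one_mul]

end MDP
namespace MDP

variable {S A Rw : Type*} (N : MDP S A Rw)

lemma abs_stepReward_le {π : S → A → ℝ} (hπ : N.IsPolicy π) :
    ∀ (k : ℕ) (s : S), |N.stepReward π k s| ≤ N.Cb := by
  intro k
  induction k with
  | zero =>
    intro s
    rw [stepReward_zero]
    exact N.abs_sum_pol_le hπ s _ _ fun a _ => N.abs_rew_le s a
  | succ k ih =>
    intro s
    rw [stepReward_succ]
    exact N.abs_sum_pol_le hπ s _ _ fun a ha =>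
      N.abs_tsum_P_mul_le ha _ _ fun s' => ih s'

lemma summable_geom_mul {γ : ℝ} (hγ0 : 0 ≤ γ) (hγ1 : γ < 1) (u : ℕ → ℝ) (K : ℝ)
    (hu : ∀ k, |u k| ≤ K) : Summable fun k => γ ^ k * u k := by
  refine Summable.of_norm_bounded (g := fun k => γ ^ k * K)
    (((summable_geometric_of_lt_one hγ0 hγ1)).mul_right K) fun k => ?_
  rw [Real.norm_eq_abs, abs_mul, abs_pow, abs_of_nonneg hγ0]
  exact mul_le_mul_of_nonneg_left (hu k) (pow_nonneg hγ0 k)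

lemma summable_value {γ : ℝ} (hγ0 : 0 ≤ γ) (hγ1 : γ < 1) {π : S → A → ℝ}
    (hπ : N.IsPolicy π) (s : S) : Summable fun k => γ ^ k * N.stepReward π k s :=
  summable_geom_mul hγ0 hγ1 _ _ fun k => N.abs_stepReward_le hπ k s

/-- Bound for value functions. -/
noncomputable def Vb (γ : ℝ) : ℝ := N.Cb * (1 - γ)⁻¹

lemma Vb_nonneg {γ : ℝ} (hγ1 : γ < 1) : 0 ≤ N.Vb γ :=
  mul_nonneg N.Cb_nonneg (inv_nonneg.2 (by linarith))

lemma abs_value_le {γ : ℝ} (hγ0 : 0 ≤ γ) (hγ1 : γ < 1) {π : S → A → ℝ}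
    (hπ : N.IsPolicy π) (s : S) : |N.value γ π s| ≤ N.Vb γ := by
  have h1 : |N.value γ π s| ≤ ∑' k : ℕ, γ ^ k * N.Cb := by
    refine abs_tsum_le_of _ _ ((summable_geometric_of_lt_one hγ0 hγ1).mul_right _)
      fun k => ?_
    rw [abs_mul, abs_pow, abs_of_nonneg hγ0]
    exact mul_le_mul_of_nonneg_left (N.abs_stepReward_le hπ k s) (pow_nonneg hγ0 k)
  calc |N.value γ π s| ≤ ∑' k : ℕ, γ ^ k * N.Cb := h1
    _ = N.Vb γ := by
      rw [tsum_mul_right, tsum_geometric_of_lt_one hγ0 hγ1, Vb, mul_comm]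

lemma stepReward_congr {π₁ π₂ : S → A → ℝ}
    (h : ∀ s a, a ∈ N.adm s → π₁ s a = π₂ s a) :
    ∀ (k : ℕ) (s : S), N.stepReward π₁ k s = N.stepReward π₂ k s := by
  intro k
  induction k with
  | zero => intro s; rw [stepReward_zero, stepReward_zero]
            exact Finset.sum_congr rfl fun a ha => by rw [h s a ha]
  | succ k ih =>
    intro s
    rw [stepReward_succ, stepReward_succ]
    refine Finset.sum_congr rfl fun a ha => ?_
    rw [h s a ha, tsum_congr fun s' => by rw [ih s']]

lemma value_congr (γ : ℝ) {π₁ π₂ : S → A → ℝ}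
    (h : ∀ s a, a ∈ N.adm s → π₁ s a = π₂ s a) (s : S) :
    N.value γ π₁ s = N.value γ π₂ s := by
  unfold value
  exact tsum_congr fun k => by rw [N.stepReward_congr h k s]

/-- The Bellman equation for the value of a policy. -/
lemma value_eq {γ : ℝ} (hγ0 : 0 ≤ γ) (hγ1 : γ < 1) {π : S → A → ℝ}
    (hπ : N.IsPolicy π) (s : S) :
    N.value γ π s = ∑ a ∈ N.adm s, π s a *
      (N.rew s a + γ * ∑' s', N.P s a s' * N.value γ π s') := by
  have hsum := N.summable_value hγ0 hγ1 hπ s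
  have h0 : N.value γ π s
      = N.stepReward π 0 s + ∑' k : ℕ, γ ^ (k+1) * N.stepReward π (k+1) s := by
    unfold value
    rw [Summable.tsum_eq_zero_add hsum, pow_zero, one_mul]
  have key : ∀ a ∈ N.adm s, ∑' k : ℕ, γ ^ k * ∑' s', N.P s a s' * N.stepReward π k s'
      = ∑' s', N.P s a s' * N.value γ π s' := by
    intro a ha
    have hun : Summable (Function.uncurry fun (k : ℕ) (s' : S) =>
        γ ^ k * (N.P s a s' * N.stepReward π k s')) := by
      refine Summable.of_norm_bounded
        (g := fun x : ℕ × S => (γ ^ x.1 * N.P s a x.2) * N.Cb)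
        ((Summable.mul_of_nonneg (summable_geometric_of_lt_one hγ0 hγ1)
          (N.summable_P ha) (fun k => pow_nonneg hγ0 k)
          (fun s' => N.P_nonneg s a s')).mul_right _) fun x => ?_
      simp only [Function.uncurry, Real.norm_eq_abs, abs_mul, abs_pow,
        abs_of_nonneg hγ0, abs_of_nonneg (N.P_nonneg s a x.2), mul_assoc]
      refine mul_le_mul_of_nonneg_left ?_ (pow_nonneg hγ0 _)
      exact mul_le_mul_of_nonneg_left (N.abs_stepReward_le hπ _ _) (N.P_nonneg _ _ _)
    calc ∑' k : ℕ, γ ^ k * ∑' s', N.P s a s' * N.stepReward π k s'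
        = ∑' (k : ℕ) (s' : S), γ ^ k * (N.P s a s' * N.stepReward π k s') := by
          exact tsum_congr fun k => (tsum_mul_left).symm
      _ = ∑' (s' : S) (k : ℕ), γ ^ k * (N.P s a s' * N.stepReward π k s') :=
          (Summable.tsum_comm hun).symm
      _ = ∑' s', N.P s a s' * N.value γ π s' := by
          refine tsum_congr fun s' => ?_
          rw [show (fun k : ℕ => γ ^ k * (N.P s a s' * N.stepReward π k s'))
            = fun k : ℕ => N.P s a s' * (γ ^ k * N.stepReward π k s') by
              funext k; ring, tsum_mul_left]
          rfl
  have htail : ∑' k : ℕ, γ ^ (k+1) * N.stepReward π (k+1) s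
      = ∑ a ∈ N.adm s, γ * π s a * ∑' s', N.P s a s' * N.value γ π s' := by
    have h1 : ∀ k : ℕ, γ ^ (k+1) * N.stepReward π (k+1) s
        = ∑ a ∈ N.adm s, γ ^ k * ((γ * π s a) *
            ∑' s', N.P s a s' * N.stepReward π k s') := by
      intro k
      rw [stepReward_succ, Finset.mul_sum]
      exact Finset.sum_congr rfl fun a _ => by ring
    rw [tsum_congr h1, Summable.tsum_finsetSum (fun a ha =>
      summable_geom_mul hγ0 hγ1 _ (|γ * π s a| * N.Cb) fun k => by
        rw [abs_mul]
        exact mul_le_mul_of_nonneg_left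
          (N.abs_tsum_P_mul_le ha _ _ fun s' => N.abs_stepReward_le hπ k s')
          (abs_nonneg _))]
    refine Finset.sum_congr rfl fun a ha => ?_
    rw [show (fun k : ℕ => γ ^ k * ((γ * π s a) *
          ∑' s', N.P s a s' * N.stepReward π k s'))
        = fun k : ℕ => (γ * π s a) * (γ ^ k *
          ∑' s', N.P s a s' * N.stepReward π k s') by funext k; ring,
      tsum_mul_left, key a ha]
  rw [h0, htail, stepReward_zero, ← Finset.sum_add_distrib]
  exact Finset.sum_congr rfl fun a _ => by ring

end MDP
namespace MDP

variable {S A Rw : Type*} (N : MDP S A Rw)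

lemma le_of_forall_le_geom {γ x y K : ℝ} (hγ0 : 0 ≤ γ) (hγ1 : γ < 1)
    (h : ∀ n : ℕ, x ≤ y + γ ^ n * K) : x ≤ y := by
  have hlim : Filter.Tendsto (fun n : ℕ => y + γ ^ n * K) Filter.atTop (nhds (y + 0 * K)) :=
    (((tendsto_pow_atTop_nhds_zero_of_lt_one hγ0 hγ1).mul_const K)).const_add y
  rw [zero_mul, add_zero] at hlim
  exact ge_of_tendsto' hlim h

/-- If a bounded function dominates the one-step Bellman update for `π`, it
dominates the value of `π`. -/
lemma value_le_of_bellman_le {γ : ℝ} (hγ0 : 0 ≤ γ) (hγ1 : γ < 1) {π : S → A → ℝ}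
    (hπ : N.IsPolicy π) (W : S → ℝ) (D : ℝ) (hD : ∀ s, |W s| ≤ D)
    (hW : ∀ s, ∑ a ∈ N.adm s, π s a *
      (N.rew s a + γ * ∑' s', N.P s a s' * W s') ≤ W s) (s : S) :
    N.value γ π s ≤ W s := by
  set K := N.Vb γ + D with hK
  have key : ∀ (n : ℕ) (s : S), N.value γ π s ≤ W s + γ ^ n * K := by
    intro n
    induction n with
    | zero =>
      intro s
      rw [pow_zero, one_mul, hK]
      have h1 := (abs_le.1 (N.abs_value_le hγ0 hγ1 hπ s)).2
      have h2 := (abs_le.1 (hD s)).1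
      linarith
    | succ n ih =>
      intro s
      rw [N.value_eq hγ0 hγ1 hπ s]
      have step1 : ∀ a ∈ N.adm s,
          N.rew s a + γ * ∑' s', N.P s a s' * N.value γ π s'
            ≤ N.rew s a + γ * ((∑' s', N.P s a s' * W s') + γ ^ n * K) := by
        intro a ha
        have hle : ∑' s', N.P s a s' * N.value γ π s'
            ≤ ∑' s', N.P s a s' * (W s' + γ ^ n * K) := by
          refine Summable.tsum_le_tsum (fun s' => mul_le_mul_of_nonneg_left (ih s')
            (N.P_nonneg s a s')) ?_ ?_
          · exact N.summable_P_mul ha _ (N.Vb γ) fun s' => N.abs_value_le hγ0 hγ1 hπ s'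
          · exact N.summable_P_mul ha _ (D + γ ^ n * |K|) fun s' => by
              have := hD s'
              calc |W s' + γ ^ n * K| ≤ |W s'| + γ ^ n * |K| := by
                    refine (abs_add_le _ _).trans ?_
                    rw [abs_mul, abs_pow, abs_of_nonneg hγ0]
                _ ≤ D + γ ^ n * |K| := by linarith
        rw [N.tsum_P_mul_add ha W D hD (γ ^ n * K)] at hle
        nlinarith [hle]
      have step2 : ∑ a ∈ N.adm s, π s a *
          (N.rew s a + γ * ∑' s', N.P s a s' * N.value γ π s')
            ≤ ∑ a ∈ N.adm s, π s a *
          (N.rew s a + γ * ((∑' s', N.P s a s' * W s') + γ ^ n * K)) :=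
        Finset.sum_le_sum fun a ha =>
          mul_le_mul_of_nonneg_left (step1 a ha) (hπ.1 s a)
      have step3 : ∑ a ∈ N.adm s, π s a *
          (N.rew s a + γ * ((∑' s', N.P s a s' * W s') + γ ^ n * K))
            = (∑ a ∈ N.adm s, π s a *
          (N.rew s a + γ * ∑' s', N.P s a s' * W s')) + γ ^ (n+1) * K := by
        have := N.sum_pol_mul_add hπ s
          (fun a => N.rew s a + γ * ∑' s', N.P s a s' * W s') (γ ^ (n+1) * K)
        rw [← this]
        exact Finset.sum_congr rfl fun a _ => by ring
      calc ∑ a ∈ N.adm s, π s a *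
          (N.rew s a + γ * ∑' s', N.P s a s' * N.value γ π s')
          ≤ (∑ a ∈ N.adm s, π s a *
            (N.rew s a + γ * ∑' s', N.P s a s' * W s')) + γ ^ (n+1) * K := by
            rw [← step3]; exact step2
        _ ≤ W s + γ ^ (n+1) * K := by linarith [hW s]
  exact le_of_forall_le_geom hγ0 hγ1 fun n => key n s

lemma value_ge_of_bellman_ge {γ : ℝ} (hγ0 : 0 ≤ γ) (hγ1 : γ < 1) {π : S → A → ℝ}
    (hπ : N.IsPolicy π) (W : S → ℝ) (D : ℝ) (hD : ∀ s, |W s| ≤ D)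
    (hW : ∀ s, W s ≤ ∑ a ∈ N.adm s, π s a *
      (N.rew s a + γ * ∑' s', N.P s a s' * W s')) (s : S) :
    W s ≤ N.value γ π s := by
  set K := N.Vb γ + D with hK
  have key : ∀ (n : ℕ) (s : S), W s ≤ N.value γ π s + γ ^ n * K := by
    intro n
    induction n with
    | zero =>
      intro s
      rw [pow_zero, one_mul, hK]
      have h1 := (abs_le.1 (N.abs_value_le hγ0 hγ1 hπ s)).1
      have h2 := (abs_le.1 (hD s)).2
      linarith
    | succ n ih =>
      intro s
      have step1 : ∀ a ∈ N.adm s,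
          N.rew s a + γ * ∑' s', N.P s a s' * W s'
            ≤ N.rew s a + γ * ((∑' s', N.P s a s' * N.value γ π s') + γ ^ n * K) := by
        intro a ha
        have hle : ∑' s', N.P s a s' * W s'
            ≤ ∑' s', N.P s a s' * (N.value γ π s' + γ ^ n * K) := by
          refine Summable.tsum_le_tsum (fun s' => mul_le_mul_of_nonneg_left (ih s')
            (N.P_nonneg s a s')) ?_ ?_
          · exact N.summable_P_mul ha _ D hD
          · exact N.summable_P_mul ha _ (N.Vb γ + γ ^ n * |K|) fun s' => by
              have := N.abs_value_le hγ0 hγ1 hπ s'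
              calc |N.value γ π s' + γ ^ n * K|
                    ≤ |N.value γ π s'| + γ ^ n * |K| := by
                    refine (abs_add_le _ _).trans ?_
                    rw [abs_mul, abs_pow, abs_of_nonneg hγ0]
                _ ≤ N.Vb γ + γ ^ n * |K| := by linarith
        rw [N.tsum_P_mul_add ha _ (N.Vb γ)
          (fun s' => N.abs_value_le hγ0 hγ1 hπ s') (γ ^ n * K)] at hle
        nlinarith [hle]
      have step2 : ∑ a ∈ N.adm s, π s a *
          (N.rew s a + γ * ∑' s', N.P s a s' * W s')
            ≤ ∑ a ∈ N.adm s, π s a *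
          (N.rew s a + γ * ((∑' s', N.P s a s' * N.value γ π s') + γ ^ n * K)) :=
        Finset.sum_le_sum fun a ha =>
          mul_le_mul_of_nonneg_left (step1 a ha) (hπ.1 s a)
      have step3 : ∑ a ∈ N.adm s, π s a *
          (N.rew s a + γ * ((∑' s', N.P s a s' * N.value γ π s') + γ ^ n * K))
            = (∑ a ∈ N.adm s, π s a *
          (N.rew s a + γ * ∑' s', N.P s a s' * N.value γ π s')) + γ ^ (n+1) * K := by
        have := N.sum_pol_mul_add hπ s
          (fun a => N.rew s a + γ * ∑' s', N.P s a s' * N.value γ π s') (γ ^ (n+1) * K)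
        rw [← this]
        exact Finset.sum_congr rfl fun a _ => by ring
      calc W s ≤ ∑ a ∈ N.adm s, π s a *
            (N.rew s a + γ * ∑' s', N.P s a s' * W s') := hW s
        _ ≤ (∑ a ∈ N.adm s, π s a *
            (N.rew s a + γ * ∑' s', N.P s a s' * N.value γ π s')) + γ ^ (n+1) * K := by
            rw [← step3]; exact step2
        _ = N.value γ π s + γ ^ (n+1) * K := by rw [← N.value_eq hγ0 hγ1 hπ s]
  exact le_of_forall_le_geom hγ0 hγ1 fun n => key n s

lemma value_eq_of_bellman_eq {γ : ℝ} (hγ0 : 0 ≤ γ) (hγ1 : γ < 1) {π : S → A → ℝ}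
    (hπ : N.IsPolicy π) (W : S → ℝ) (D : ℝ) (hD : ∀ s, |W s| ≤ D)
    (hW : ∀ s, ∑ a ∈ N.adm s, π s a *
      (N.rew s a + γ * ∑' s', N.P s a s' * W s') = W s) (s : S) :
    N.value γ π s = W s :=
  le_antisymm (N.value_le_of_bellman_le hγ0 hγ1 hπ W D hD (fun s => (hW s).le) s)
    (N.value_ge_of_bellman_ge hγ0 hγ1 hπ W D hD (fun s => (hW s).ge) s)

end MDP
namespace MDP

variable {S A Rw : Type*} (N : MDP S A Rw)

/-- The Bellman optimality operator. -/
noncomputable def Topt (γ : ℝ) (W : S → ℝ) (s : S) : ℝ :=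
  (N.adm s).sup' (N.adm_nonempty s) fun a => N.rew s a + γ * ∑' s', N.P s a s' * W s'

lemma abs_sup'_le {s : Finset A} (hs : s.Nonempty) (f : A → ℝ) (K : ℝ)
    (hf : ∀ a ∈ s, |f a| ≤ K) : |s.sup' hs f| ≤ K := by
  obtain ⟨a0, ha0⟩ := hs
  refine abs_le.2 ⟨le_trans (abs_le.1 (hf a0 ha0)).1 (Finset.le_sup' f ha0), ?_⟩
  exact Finset.sup'_le _ f fun a ha => (abs_le.1 (hf a ha)).2

lemma sup'_sub_le {s : Finset A} (hs : s.Nonempty) (f g : A → ℝ) (δ : ℝ)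
    (h : ∀ a ∈ s, |f a - g a| ≤ δ) : |s.sup' hs f - s.sup' hs g| ≤ δ := by
  have h1 : s.sup' hs f ≤ s.sup' hs g + δ :=
    Finset.sup'_le hs f fun a ha => by
      have := (abs_le.1 (h a ha)).2
      have := Finset.le_sup' g ha
      linarith
  have h2 : s.sup' hs g ≤ s.sup' hs f + δ :=
    Finset.sup'_le hs g fun a ha => by
      have := (abs_le.1 (h a ha)).1
      have := Finset.le_sup' f ha
      linarith
  rw [abs_le]
  constructor <;> linarith

lemma abs_Topt_le {γ : ℝ} (hγ0 : 0 ≤ γ) (W : S → ℝ) (D : ℝ) (hD : ∀ s', |W s'| ≤ D)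
    (s : S) : |N.Topt γ W s| ≤ N.Cb + γ * D := by
  refine abs_sup'_le _ _ _ fun a ha => ?_
  have h1 := N.abs_rew_le s a
  have h2 : |γ * ∑' s', N.P s a s' * W s'| ≤ γ * D := by
    rw [abs_mul, abs_of_nonneg hγ0]
    exact mul_le_mul_of_nonneg_left (N.abs_tsum_P_mul_le ha W D hD) hγ0
  calc |N.rew s a + γ * ∑' s', N.P s a s' * W s'|
      ≤ |N.rew s a| + |γ * ∑' s', N.P s a s' * W s'| := abs_add_le _ _
    _ ≤ N.Cb + γ * D := by linarith

lemma Topt_contract {γ : ℝ} (hγ0 : 0 ≤ γ) (U U' : S → ℝ) (DU DU' δ : ℝ)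
    (hU : ∀ s', |U s'| ≤ DU) (hU' : ∀ s', |U' s'| ≤ DU')
    (h : ∀ s', |U s' - U' s'| ≤ δ) (s : S) :
    |N.Topt γ U s - N.Topt γ U' s| ≤ γ * δ := by
  refine sup'_sub_le _ _ _ _ fun a ha => ?_
  have hsub : (N.rew s a + γ * ∑' s', N.P s a s' * U s')
      - (N.rew s a + γ * ∑' s', N.P s a s' * U' s')
      = γ * ∑' s', N.P s a s' * (U s' - U' s') := by
    have h1 := N.summable_P_mul ha U DU hU
    have h2 := N.summable_P_mul ha U' DU' hU'
    have : ∑' s', N.P s a s' * (U s' - U' s')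
        = (∑' s', N.P s a s' * U s') - ∑' s', N.P s a s' * U' s' := by
      rw [← Summable.tsum_sub h1 h2]
      exact tsum_congr fun s' => by ring
    rw [this]; ring
  rw [hsub, abs_mul, abs_of_nonneg hγ0]
  exact mul_le_mul_of_nonneg_left
    (N.abs_tsum_P_mul_le ha _ δ fun s' => h s') hγ0

/-- Value iteration. -/
noncomputable def Wit (γ : ℝ) : ℕ → S → ℝ
  | 0 => fun _ => 0
  | n+1 => N.Topt γ (Wit γ n)

lemma Wit_zero (γ : ℝ) (s : S) : N.Wit γ 0 s = 0 := rfl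

lemma Wit_succ (γ : ℝ) (n : ℕ) : N.Wit γ (n+1) = N.Topt γ (N.Wit γ n) := rfl

lemma abs_Wit_le {γ : ℝ} (hγ0 : 0 ≤ γ) (hγ1 : γ < 1) :
    ∀ (n : ℕ) (s : S), |N.Wit γ n s| ≤ N.Vb γ := by
  intro n
  induction n with
  | zero => intro s; simp [Wit, N.Vb_nonneg hγ1]
  | succ n ih =>
    intro s
    have h := N.abs_Topt_le hγ0 (N.Wit γ n) (N.Vb γ) ih s
    have h1γ : (0:ℝ) < 1 - γ := by linarith
    have heq : N.Cb + γ * N.Vb γ = N.Vb γ := by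
      rw [Vb]
      field_simp
      ring
    rw [Wit_succ]
    rw [heq] at h
    exact h

lemma abs_Wit_diff_le {γ : ℝ} (hγ0 : 0 ≤ γ) (hγ1 : γ < 1) :
    ∀ (n : ℕ) (s : S), |N.Wit γ (n+1) s - N.Wit γ n s| ≤ γ ^ n * N.Cb := by
  intro n
  induction n with
  | zero =>
    intro s
    rw [pow_zero, one_mul, Wit_zero, sub_zero, Wit_succ]
    have := N.abs_Topt_le hγ0 (N.Wit γ 0) 0 (fun s' => by rw [Wit_zero]; simp) s
    rw [mul_zero, add_zero] at this
    exact this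
  | succ n ih =>
    intro s
    have hc := N.Topt_contract hγ0 (N.Wit γ (n+1)) (N.Wit γ n) (N.Vb γ) (N.Vb γ)
      (γ ^ n * N.Cb) (N.abs_Wit_le hγ0 hγ1 (n+1)) (N.abs_Wit_le hγ0 hγ1 n) ih s
    rw [N.Wit_succ γ (n+1), N.Wit_succ γ n]
    calc |N.Topt γ (N.Wit γ (n+1)) s - N.Topt γ (N.Wit γ n) s|
        ≤ γ * (γ ^ n * N.Cb) := hc
      _ = γ ^ (n+1) * N.Cb := by ring

/-- The limit of value iteration. -/
noncomputable def Wlim (γ : ℝ) (s : S) : ℝ :=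
  ∑' n : ℕ, (N.Wit γ (n+1) s - N.Wit γ n s)

lemma summable_Wdiff {γ : ℝ} (hγ0 : 0 ≤ γ) (hγ1 : γ < 1) (s : S) :
    Summable fun n : ℕ => N.Wit γ (n+1) s - N.Wit γ n s := by
  refine Summable.of_norm_bounded (g := fun n => γ ^ n * N.Cb)
    ((summable_geometric_of_lt_one hγ0 hγ1).mul_right _) fun n => ?_
  rw [Real.norm_eq_abs]
  exact N.abs_Wit_diff_le hγ0 hγ1 n s

lemma abs_Wlim_sub_Wit {γ : ℝ} (hγ0 : 0 ≤ γ) (hγ1 : γ < 1) (n : ℕ) (s : S) :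
    |N.Wlim γ s - N.Wit γ n s| ≤ γ ^ n * N.Vb γ := by
  have hsum := N.summable_Wdiff hγ0 hγ1 s
  have htel : ∑ i ∈ Finset.range n, (N.Wit γ (i+1) s - N.Wit γ i s) = N.Wit γ n s := by
    rw [Finset.sum_range_sub (fun i => N.Wit γ i s) n]
    simp [Wit]
  have hsplit := Summable.sum_add_tsum_nat_add n hsum
  rw [htel] at hsplit
  have : N.Wlim γ s - N.Wit γ n s = ∑' i : ℕ, (N.Wit γ (i+n+1) s - N.Wit γ (i+n) s) := by
    rw [Wlim, ← hsplit]; ring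
  rw [this]
  have h1 : |∑' i : ℕ, (N.Wit γ (i+n+1) s - N.Wit γ (i+n) s)|
      ≤ ∑' i : ℕ, γ ^ (i+n) * N.Cb := by
    refine abs_tsum_le_of _ _ ?_ fun i => N.abs_Wit_diff_le hγ0 hγ1 (i+n) s
    have : (fun i : ℕ => γ ^ (i+n) * N.Cb) = fun i : ℕ => γ ^ i * (γ ^ n * N.Cb) := by
      funext i; rw [pow_add]; ring
    rw [this]
    exact (summable_geometric_of_lt_one hγ0 hγ1).mul_right _
  refine h1.trans ?_
  have : ∑' i : ℕ, γ ^ (i+n) * N.Cb = γ ^ n * N.Vb γ := by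
    have heq : (fun i : ℕ => γ ^ (i+n) * N.Cb) = fun i : ℕ => γ ^ i * (γ ^ n * N.Cb) := by
      funext i; rw [pow_add]; ring
    rw [heq, tsum_mul_right, tsum_geometric_of_lt_one hγ0 hγ1, Vb]
    ring
  rw [this]

lemma abs_Wlim_le {γ : ℝ} (hγ0 : 0 ≤ γ) (hγ1 : γ < 1) (s : S) :
    |N.Wlim γ s| ≤ N.Vb γ := by
  have := N.abs_Wlim_sub_Wit hγ0 hγ1 0 s
  simpa [Wit] using this

lemma eq_zero_of_abs_le_geom {γ x K : ℝ} (hγ0 : 0 ≤ γ) (hγ1 : γ < 1)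
    (h : ∀ n : ℕ, |x| ≤ γ ^ n * K) : x = 0 := by
  have : |x| ≤ 0 := by
    have hlim : Filter.Tendsto (fun n : ℕ => γ ^ n * K) Filter.atTop (nhds 0) := by
      have := (tendsto_pow_atTop_nhds_zero_of_lt_one hγ0 hγ1).mul_const K
      rwa [zero_mul] at this
    exact ge_of_tendsto' hlim h
  exact abs_eq_zero.1 (le_antisymm this (abs_nonneg x))

lemma Topt_Wlim {γ : ℝ} (hγ0 : 0 ≤ γ) (hγ1 : γ < 1) (s : S) :
    N.Topt γ (N.Wlim γ) s = N.Wlim γ s := by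
  rw [← sub_eq_zero]
  refine eq_zero_of_abs_le_geom hγ0 hγ1 (K := 2 * N.Vb γ) fun n => ?_
  have h1 : |N.Topt γ (N.Wlim γ) s - N.Wit γ (n+1) s| ≤ γ * (γ ^ n * N.Vb γ) := by
    rw [Wit_succ]
    exact N.Topt_contract hγ0 (N.Wlim γ) (N.Wit γ n) (N.Vb γ) (N.Vb γ) _
      (N.abs_Wlim_le hγ0 hγ1) (N.abs_Wit_le hγ0 hγ1 n)
      (fun s' => N.abs_Wlim_sub_Wit hγ0 hγ1 n s') s
  have h2 := N.abs_Wlim_sub_Wit hγ0 hγ1 (n+1) s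
  have h3 : |N.Topt γ (N.Wlim γ) s - N.Wlim γ s|
      ≤ |N.Topt γ (N.Wlim γ) s - N.Wit γ (n+1) s| + |N.Wit γ (n+1) s - N.Wlim γ s| := by
    have := abs_sub_le (N.Topt γ (N.Wlim γ) s) (N.Wit γ (n+1) s) (N.Wlim γ s)
    exact this
  rw [abs_sub_comm (N.Wit γ (n+1) s)] at h3
  have hp : γ ^ (n+1) * N.Vb γ ≤ γ ^ n * N.Vb γ := by
    have := N.Vb_nonneg (γ := γ) hγ1
    have hpow : γ ^ (n+1) ≤ γ ^ n := by
      calc γ ^ (n+1) = γ ^ n * γ := by ring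
        _ ≤ γ ^ n * 1 := by
          refine mul_le_mul_of_nonneg_left (le_of_lt hγ1) (pow_nonneg hγ0 n)
        _ = γ ^ n := mul_one _
    exact mul_le_mul_of_nonneg_right hpow this
  calc |N.Topt γ (N.Wlim γ) s - N.Wlim γ s|
      ≤ γ * (γ ^ n * N.Vb γ) + γ ^ (n+1) * N.Vb γ := by linarith
    _ = γ ^ (n+1) * N.Vb γ + γ ^ (n+1) * N.Vb γ := by ring
    _ ≤ γ ^ n * N.Vb γ + γ ^ n * N.Vb γ := by linarith
    _ = γ ^ n * (2 * N.Vb γ) := by ring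

lemma value_le_Wit {γ : ℝ} (hγ0 : 0 ≤ γ) (hγ1 : γ < 1) {π : S → A → ℝ}
    (hπ : N.IsPolicy π) : ∀ (n : ℕ) (s : S),
    N.value γ π s ≤ N.Wit γ n s + γ ^ n * N.Vb γ := by
  intro n
  induction n with
  | zero =>
    intro s
    simp only [Wit, pow_zero, one_mul, zero_add]
    exact (abs_le.1 (N.abs_value_le hγ0 hγ1 hπ s)).2
  | succ n ih =>
    intro s
    rw [N.value_eq hγ0 hγ1 hπ s]
    refine (N.sum_pol_le hπ s _ (N.Wit γ (n+1) s + γ ^ (n+1) * N.Vb γ)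
      fun a ha => ?_)
    have hle : ∑' s', N.P s a s' * N.value γ π s'
        ≤ ∑' s', N.P s a s' * (N.Wit γ n s' + γ ^ n * N.Vb γ) := by
      refine Summable.tsum_le_tsum (fun s' => mul_le_mul_of_nonneg_left (ih s')
        (N.P_nonneg s a s')) ?_ ?_
      · exact N.summable_P_mul ha _ (N.Vb γ) fun s' => N.abs_value_le hγ0 hγ1 hπ s'
      · refine N.summable_P_mul ha _ (N.Vb γ + γ ^ n * N.Vb γ) fun s' => ?_
        calc |N.Wit γ n s' + γ ^ n * N.Vb γ|
            ≤ |N.Wit γ n s'| + γ ^ n * N.Vb γ := by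
              refine (abs_add_le _ _).trans ?_
              have : |γ ^ n * N.Vb γ| = γ ^ n * N.Vb γ :=
                abs_of_nonneg (mul_nonneg (pow_nonneg hγ0 n) (N.Vb_nonneg hγ1))
              rw [this]
          _ ≤ N.Vb γ + γ ^ n * N.Vb γ := by linarith [N.abs_Wit_le hγ0 hγ1 n s']
    rw [N.tsum_P_mul_add ha _ (N.Vb γ) (N.abs_Wit_le hγ0 hγ1 n) (γ ^ n * N.Vb γ)] at hle
    have hsup : N.rew s a + γ * ∑' s', N.P s a s' * N.Wit γ n s' ≤ N.Wit γ (n+1) s := by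
      rw [Wit_succ]
      exact Finset.le_sup'
        (f := fun a => N.rew s a + γ * ∑' s', N.P s a s' * N.Wit γ n s') ha
    have hmul := mul_le_mul_of_nonneg_left hle hγ0
    have hexp : γ * ((∑' s', N.P s a s' * N.Wit γ n s') + γ ^ n * N.Vb γ)
        = γ * (∑' s', N.P s a s' * N.Wit γ n s') + γ ^ (n+1) * N.Vb γ := by ring
    linarith [hmul, hexp, hsup]

lemma value_le_Wlim {γ : ℝ} (hγ0 : 0 ≤ γ) (hγ1 : γ < 1) {π : S → A → ℝ}
    (hπ : N.IsPolicy π) (s : S) : N.value γ π s ≤ N.Wlim γ s := by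
  refine le_of_forall_le_geom hγ0 hγ1 (K := 2 * N.Vb γ) fun n => ?_
  have h1 := N.value_le_Wit hγ0 hγ1 hπ n s
  have h2 := (abs_le.1 (N.abs_Wlim_sub_Wit hγ0 hγ1 n s)).1
  nlinarith [h1, h2]

end MDP
namespace MDP

variable {S A Rw : Type*} (N : MDP S A Rw)

open Classical in
/-- There is a (greedy) policy achieving the fixed point of value iteration. -/
lemma exists_greedy {γ : ℝ} (hγ0 : 0 ≤ γ) (hγ1 : γ < 1) :
    ∃ πg : S → A → ℝ, N.IsPolicy πg ∧ ∀ s, N.value γ πg s = N.Wlim γ s := by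
  classical
  have hch : ∀ s : S, ∃ a ∈ N.adm s,
      N.Topt γ (N.Wlim γ) s
        = N.rew s a + γ * ∑' s', N.P s a s' * N.Wlim γ s' := fun s =>
    Finset.exists_mem_eq_sup' (N.adm_nonempty s) _
  choose astar hastar hopt using hch
  refine ⟨fun s a => if a = astar s then 1 else 0, ⟨?_, ?_, ?_⟩, ?_⟩
  · intro s a; dsimp only; split <;> norm_num
  · intro s a ha; dsimp only
    split
    · next heq => exact absurd (heq ▸ hastar s) ha
    · rfl
  · intro s
    rw [Finset.sum_ite_eq' (N.adm s) (astar s) (fun _ => (1:ℝ))]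
    simp [hastar s]
  · intro s0
    have hpol : N.IsPolicy (fun s a => if a = astar s then (1:ℝ) else 0) := by
      refine ⟨fun s a => by dsimp only; split <;> norm_num, fun s a ha => by
        dsimp only
        split
        · next heq => exact absurd (heq ▸ hastar s) ha
        · rfl, fun s => by
        rw [Finset.sum_ite_eq' (N.adm s) (astar s) (fun _ => (1:ℝ))]
        simp [hastar s]⟩
    refine N.value_eq_of_bellman_eq hγ0 hγ1 hpol (N.Wlim γ) (N.Vb γ)
      (N.abs_Wlim_le hγ0 hγ1) (fun s => ?_) s0
    have hsum : ∑ a ∈ N.adm s, (if a = astar s then (1:ℝ) else 0) *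
        (N.rew s a + γ * ∑' s', N.P s a s' * N.Wlim γ s')
        = N.rew s (astar s) + γ * ∑' s', N.P s (astar s) s' * N.Wlim γ s' := by
      rw [show (fun a => (if a = astar s then (1:ℝ) else 0) *
          (N.rew s a + γ * ∑' s', N.P s a s' * N.Wlim γ s'))
          = fun a => if a = astar s then
            (N.rew s a + γ * ∑' s', N.P s a s' * N.Wlim γ s') else 0 from
        funext fun a => by split <;> simp]
      rw [Finset.sum_ite_eq' (N.adm s) (astar s)]
      simp [hastar s]
    rw [hsum, ← hopt s, N.Topt_Wlim hγ0 hγ1 s]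

lemma optValue_eq_Wlim {γ : ℝ} (hγ0 : 0 ≤ γ) (hγ1 : γ < 1) (s : S) :
    N.optValue γ s = N.Wlim γ s := by
  obtain ⟨πg, hpg, hvg⟩ := N.exists_greedy hγ0 hγ1
  haveI : Nonempty {π : S → A → ℝ // N.IsPolicy π} := ⟨⟨πg, hpg⟩⟩
  refine le_antisymm ?_ ?_
  · exact ciSup_le fun π => N.value_le_Wlim hγ0 hγ1 π.2 s
  · have hb : BddAbove (Set.range fun π : {π : S → A → ℝ // N.IsPolicy π} =>
        N.value γ π.1 s) := by
      refine ⟨N.Wlim γ s, ?_⟩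
      rintro x ⟨π, rfl⟩
      exact N.value_le_Wlim hγ0 hγ1 π.2 s
    calc N.Wlim γ s = N.value γ πg s := (hvg s).symm
      _ ≤ N.optValue γ s := le_ciSup hb ⟨πg, hpg⟩

lemma abs_optValue_le {γ : ℝ} (hγ0 : 0 ≤ γ) (hγ1 : γ < 1) (s : S) :
    |N.optValue γ s| ≤ N.Vb γ := by
  rw [N.optValue_eq_Wlim hγ0 hγ1 s]
  exact N.abs_Wlim_le hγ0 hγ1 s

/-- The Bellman optimality inequality for the optimal value function. -/
lemma bellman_opt {γ : ℝ} (hγ0 : 0 ≤ γ) (hγ1 : γ < 1) {s : S} {a : A}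
    (ha : a ∈ N.adm s) :
    N.rew s a + γ * ∑' s', N.P s a s' * N.optValue γ s' ≤ N.optValue γ s := by
  have h1 : ∑' s', N.P s a s' * N.optValue γ s' = ∑' s', N.P s a s' * N.Wlim γ s' :=
    tsum_congr fun s' => by rw [N.optValue_eq_Wlim hγ0 hγ1 s']
  rw [h1, N.optValue_eq_Wlim hγ0 hγ1 s, ← N.Topt_Wlim hγ0 hγ1 s]
  exact Finset.le_sup'
    (f := fun a => N.rew s a + γ * ∑' s', N.P s a s' * N.Wlim γ s') ha

/-- A policy is optimal as soon as its value dominates every policy's value. -/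
lemma isOptimal_of_value_eq {γ : ℝ} (hγ0 : 0 ≤ γ) (hγ1 : γ < 1) {π : S → A → ℝ}
    (hπ : N.IsPolicy π) (h : ∀ s, N.value γ π s = N.Wlim γ s) : N.IsOptimal γ π :=
  ⟨hπ, fun s => by rw [h s, N.optValue_eq_Wlim hγ0 hγ1 s]⟩

end MDP
namespace MDP

variable {S A S' A' Rw : Type*} (M : MDP S A Rw) (Mt : MDP S' A' Rw)
  (h : M.Relabeling Mt)

lemma relabel_g_mem {s : S} {a : A} (ha : a ∈ M.adm s) :
    h.g s a ∈ Mt.adm (h.f s) := by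
  have := (h.g_bij s).mapsTo (by simpa using ha)
  simpa using this

lemma relabel_sum (s : S) (F : A' → ℝ) :
    ∑ a ∈ M.adm s, F (h.g s a) = ∑ a' ∈ Mt.adm (h.f s), F a' := by
  refine Finset.sum_bij (fun a _ => h.g s a) ?_ ?_ ?_ ?_
  · intro a ha; exact M.relabel_g_mem Mt h ha
  · intro a1 ha1 a2 ha2 hgeq
    exact (h.g_bij s).injOn (by simpa using ha1) (by simpa using ha2) hgeq
  · intro a' ha'
    obtain ⟨a, ha, hae⟩ := (h.g_bij s).surjOn (by simpa using ha' :
      a' ∈ (Mt.adm (h.f s) : Set A'))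
    exact ⟨a, by simpa using ha, hae⟩
  · intro a _; rfl

lemma relabel_P {s : S} {a : A} (ha : a ∈ M.adm s) (st : S) :
    M.P s a st = Mt.P (h.f s) (h.g s a) (h.f st) :=
  tsum_congr fun r => h.dyn s a ha st r

lemma relabel_rew {s : S} {a : A} (ha : a ∈ M.adm s) :
    M.rew s a = Mt.rew (h.f s) (h.g s a) := by
  unfold rew
  rw [← Equiv.tsum_eq ((Equiv.ofBijective h.f h.f_bij).prodCongr (Equiv.refl Rw))
    (fun x : S' × Rw => Mt.p x.1 x.2 (h.f s) (h.g s a) * Mt.rval x.2)]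
  refine tsum_congr fun x => ?_
  show M.p x.1 x.2 s a * M.rval x.2
      = Mt.p (h.f x.1) x.2 (h.f s) (h.g s a) * Mt.rval x.2
  rw [← h.dyn s a ha x.1 x.2, h.rval_eq]

lemma relabel_policy {ρ : S' → A' → ℝ} (hρ : Mt.IsPolicy ρ) {σ : S → A → ℝ}
    (hσ : ∀ s a, a ∈ M.adm s → σ s a = ρ (h.f s) (h.g s a))
    (hσ0 : ∀ s a, a ∉ M.adm s → σ s a = 0) : M.IsPolicy σ := by
  refine ⟨fun s a => ?_, hσ0, fun s => ?_⟩
  · by_cases ha : a ∈ M.adm s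
    · rw [hσ s a ha]; exact hρ.1 _ _
    · rw [hσ0 s a ha]
  · calc ∑ a ∈ M.adm s, σ s a = ∑ a ∈ M.adm s, ρ (h.f s) (h.g s a) :=
        Finset.sum_congr rfl fun a ha => hσ s a ha
      _ = ∑ a' ∈ Mt.adm (h.f s), ρ (h.f s) a' := M.relabel_sum Mt h s _
      _ = 1 := hρ.2.2 _

lemma relabel_stepReward {ρ : S' → A' → ℝ} {σ : S → A → ℝ}
    (hσ : ∀ s a, a ∈ M.adm s → σ s a = ρ (h.f s) (h.g s a)) :
    ∀ (k : ℕ) (s : S), M.stepReward σ k s = Mt.stepReward ρ k (h.f s) := by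
  intro k
  induction k with
  | zero =>
    intro s
    rw [stepReward_zero, stepReward_zero, ← M.relabel_sum Mt h s
      (fun a' => ρ (h.f s) a' * Mt.rew (h.f s) a')]
    exact Finset.sum_congr rfl fun a ha => by
      rw [hσ s a ha, M.relabel_rew Mt h ha]
  | succ k ih =>
    intro s
    rw [stepReward_succ, stepReward_succ, ← M.relabel_sum Mt h s
      (fun a' => ρ (h.f s) a' * ∑' st', Mt.P (h.f s) a' st' * Mt.stepReward ρ k st')]
    refine Finset.sum_congr rfl fun a ha => ?_
    rw [hσ s a ha]
    congr 1
    rw [← Equiv.tsum_eq (Equiv.ofBijective h.f h.f_bij)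
      (fun st' : S' => Mt.P (h.f s) (h.g s a) st' * Mt.stepReward ρ k st')]
    exact tsum_congr fun st => by
      rw [show (Equiv.ofBijective h.f h.f_bij) st = h.f st from rfl,
        ← M.relabel_P Mt h ha st, ih st]

lemma relabel_value {γ : ℝ} {ρ : S' → A' → ℝ} {σ : S → A → ℝ}
    (hσ : ∀ s a, a ∈ M.adm s → σ s a = ρ (h.f s) (h.g s a)) (s : S) :
    M.value γ σ s = Mt.value γ ρ (h.f s) := by
  unfold value
  exact tsum_congr fun k => by rw [M.relabel_stepReward Mt h hσ k s]

lemma relabel_optValue {γ : ℝ} (hγ0 : 0 ≤ γ) (hγ1 : γ < 1) (s : S) :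
    M.optValue γ s = Mt.optValue γ (h.f s) := by
  classical
  haveI hNA : Nonempty A := ⟨(M.adm_nonempty s).choose⟩
  obtain ⟨πgM, hpgM, _⟩ := M.exists_greedy hγ0 hγ1
  obtain ⟨πgMt, hpgMt, _⟩ := Mt.exists_greedy hγ0 hγ1
  haveI : Nonempty {π : S → A → ℝ // M.IsPolicy π} := ⟨⟨πgM, hpgM⟩⟩
  haveI : Nonempty {π : S' → A' → ℝ // Mt.IsPolicy π} := ⟨⟨πgMt, hpgMt⟩⟩
  have hbM : BddAbove (Set.range fun π : {π : S → A → ℝ // M.IsPolicy π} =>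
      M.value γ π.1 s) := by
    refine ⟨M.Vb γ, ?_⟩; rintro x ⟨π, rfl⟩
    exact (abs_le.1 (M.abs_value_le hγ0 hγ1 π.2 s)).2
  have hbMt : BddAbove (Set.range fun π : {π : S' → A' → ℝ // Mt.IsPolicy π} =>
      Mt.value γ π.1 (h.f s)) := by
    refine ⟨Mt.Vb γ, ?_⟩; rintro x ⟨π, rfl⟩
    exact (abs_le.1 (Mt.abs_value_le hγ0 hγ1 π.2 (h.f s))).2
  refine le_antisymm ?_ ?_
  · -- every M-policy comes from an Mt-policy
    refine ciSup_le fun σp => ?_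
    obtain ⟨σ, hσpol⟩ := σp
    set e := Equiv.ofBijective h.f h.f_bij with he
    set ρ : S' → A' → ℝ := fun s' a' =>
      if a' ∈ Mt.adm s' then
        σ (e.symm s') (Function.invFunOn (h.g (e.symm s')) (M.adm (e.symm s')) a')
      else 0 with hρdef
    have hfe : ∀ t : S, e.symm (h.f t) = t := fun t => e.symm_apply_apply t
    have hρval : ∀ (t : S) (a : A), a ∈ M.adm t → ρ (h.f t) (h.g t a) = σ t a := by
      intro t a ha
      rw [hρdef]
      dsimp only
      rw [if_pos (M.relabel_g_mem Mt h ha)]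
      rw [hfe t]
      congr 1
      exact ((h.g_bij t).injOn).leftInvOn_invFunOn (by simpa using ha)
    have hρpol : Mt.IsPolicy ρ := by
      refine ⟨fun s' a' => ?_, fun s' a' ha' => by rw [hρdef]; exact if_neg ha', fun s' => ?_⟩
      · rw [hρdef]; dsimp only; split
        · exact hσpol.1 _ _
        · rfl
      · have hs' : s' = h.f (e.symm s') := (e.apply_symm_apply s').symm
        calc ∑ a' ∈ Mt.adm s', ρ s' a'
            = ∑ a' ∈ Mt.adm (h.f (e.symm s')), ρ (h.f (e.symm s')) a' := by rw [← hs']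
          _ = ∑ a ∈ M.adm (e.symm s'), ρ (h.f (e.symm s')) (h.g (e.symm s') a) :=
              (M.relabel_sum Mt h (e.symm s') _).symm
          _ = ∑ a ∈ M.adm (e.symm s'), σ (e.symm s') a :=
              Finset.sum_congr rfl fun a ha => hρval (e.symm s') a ha
          _ = 1 := hσpol.2.2 _
    have : M.value γ σ s = Mt.value γ ρ (h.f s) :=
      M.relabel_value Mt h (fun t a ha => (hρval t a ha).symm) s
    rw [this]
    exact le_ciSup hbMt ⟨ρ, hρpol⟩
  · refine ciSup_le fun ρp => ?_
    obtain ⟨ρ, hρpol⟩ := ρp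
    set σ : S → A → ℝ := fun t a =>
      if a ∈ M.adm t then ρ (h.f t) (h.g t a) else 0 with hσdef
    have hσval : ∀ t a, a ∈ M.adm t → σ t a = ρ (h.f t) (h.g t a) := by
      intro t a ha; rw [hσdef]; exact if_pos ha
    have hσpol : M.IsPolicy σ :=
      M.relabel_policy Mt h hρpol hσval fun t a ha => by rw [hσdef]; exact if_neg ha
    have : Mt.value γ ρ (h.f s) = M.value γ σ s :=
      (M.relabel_value Mt h hσval s).symm
    rw [this]
    exact le_ciSup hbM ⟨σ, hσpol⟩

lemma relabel_isOptimal {γ : ℝ} (hγ0 : 0 ≤ γ) (hγ1 : γ < 1) {ρ : S' → A' → ℝ}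
    {σ : S → A → ℝ}
    (hσ : ∀ s a, a ∈ M.adm s → σ s a = ρ (h.f s) (h.g s a))
    (hσ0 : ∀ s a, a ∉ M.adm s → σ s a = 0)
    (hopt : Mt.IsOptimal γ ρ) : M.IsOptimal γ σ := by
  refine ⟨M.relabel_policy Mt h hopt.1 hσ hσ0, fun s => ?_⟩
  rw [M.relabel_value Mt h hσ s, hopt.2 (h.f s), M.relabel_optValue Mt h hγ0 hγ1 s]

end MDP
namespace MDP

variable {S' A' Rw' : Type*} (M' : MDP S' A' Rw') (V : M'.VisibleSymmetry)
  (Q : MDP (Quotient V.eqS) (Quotient V.eqP) Rw')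

section Quot

variable
  (hrval : Q.rval = M'.rval)
  (hQadm : ∀ (q : M'.Pairs) (X : Quotient V.eqS),
      Quotient.mk V.eqP q ∈ Q.adm X ↔ Quotient.mk V.eqS q.1.1 = X)
  (hQp : ∀ (q : M'.Pairs) (s' : S') (r : Rw'),
      Q.p (Quotient.mk V.eqS s') r (Quotient.mk V.eqS q.1.1) (Quotient.mk V.eqP q) =
        ∑' x : {x : S' // V.eqS.r x s'}, M'.p x.1 r q.1.1 q.1.2)

lemma mkS_eq_iff {x t : S'} :
    Quotient.mk V.eqS x = Quotient.mk V.eqS t ↔ V.eqS.r x t :=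
  ⟨Quotient.exact, Quotient.sound⟩

include hQp in
lemma fiber_tsum (q : M'.Pairs) (r : Rw') (t : S') :
    ∑' x : {x : S' // Quotient.mk V.eqS x = Quotient.mk V.eqS t}, M'.p x.1 r q.1.1 q.1.2
      = Q.p (Quotient.mk V.eqS t) r (Quotient.mk V.eqS q.1.1) (Quotient.mk V.eqP q) := by
  rw [hQp q t r]
  exact Equiv.tsum_eq
    (Equiv.subtypeEquivRight fun x => mkS_eq_iff M' V)
    (fun x : {x : S' // V.eqS.r x t} => M'.p x.1 r q.1.1 q.1.2)

include hQadm hQp in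
set_option maxHeartbeats 800000 in
lemma master (q : M'.Pairs) (u : Quotient V.eqS → Rw' → ℝ) (K : ℝ)
    (hK : ∀ Y r, |u Y r| ≤ K) :
    ∑' y : Quotient V.eqS × Rw',
        Q.p y.1 y.2 (Quotient.mk V.eqS q.1.1) (Quotient.mk V.eqP q) * u y.1 y.2
      = ∑' x : S' × Rw',
          M'.p x.1 x.2 q.1.1 q.1.2 * u (Quotient.mk V.eqS x.1) x.2 := by
  have hadm_c : Quotient.mk V.eqP q ∈ Q.adm (Quotient.mk V.eqS q.1.1) :=
    (hQadm q _).2 rfl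
  have hsQ : Summable fun y : Quotient V.eqS × Rw' =>
      Q.p y.1 y.2 (Quotient.mk V.eqS q.1.1) (Quotient.mk V.eqP q) * u y.1 y.2 :=
    Q.summable_p_mul hadm_c _ K fun y => hK y.1 y.2
  have hsM : Summable fun x : S' × Rw' =>
      M'.p x.1 x.2 q.1.1 q.1.2 * u (Quotient.mk V.eqS x.1) x.2 :=
    M'.summable_p_mul q.2 _ K fun x => hK _ x.2
  rw [Summable.tsum_prod hsQ, Summable.tsum_prod hsM]
  -- the fiberwise sums of the right-hand side
  set g : S' → ℝ := fun x =>
    ∑' r : Rw', M'.p x r q.1.1 q.1.2 * u (Quotient.mk V.eqS x) r with hg_def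
  have hg : Summable g :=
    ⟨_, hsM.hasSum.prod_fiberwise fun b => (hsM.prod_factor b).hasSum⟩
  have hre : ∑' x : S', g x
      = ∑' σ : Σ Y : Quotient V.eqS, {x : S' // Quotient.mk V.eqS x = Y},
          g σ.2.1 := by
    rw [← Equiv.tsum_eq (Equiv.sigmaFiberEquiv (Quotient.mk V.eqS)) g]
    rfl
  have hsig : Summable fun σ : Σ Y : Quotient V.eqS,
      {x : S' // Quotient.mk V.eqS x = Y} => g σ.2.1 :=
    (Equiv.summable_iff (Equiv.sigmaFiberEquiv (Quotient.mk V.eqS))).2 hg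
  have key : ∀ Y : Quotient V.eqS,
      ∑' x : {x : S' // Quotient.mk V.eqS x = Y}, g x.1
        = ∑' r : Rw',
            Q.p Y r (Quotient.mk V.eqS q.1.1) (Quotient.mk V.eqP q) * u Y r := by
    refine Quotient.ind fun t => ?_
    have hu : ∀ x : {x : S' // Quotient.mk V.eqS x = Quotient.mk V.eqS t},
        g x.1 = ∑' r : Rw', M'.p x.1 r q.1.1 q.1.2 * u (Quotient.mk V.eqS t) r := by
      intro x
      rw [hg_def]
      exact tsum_congr fun r => by rw [x.2]
    rw [tsum_congr hu]
    -- swap the two sums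
    have hsM2 : Summable fun x : S' × Rw' =>
        M'.p x.1 x.2 q.1.1 q.1.2 * u (Quotient.mk V.eqS t) x.2 :=
      M'.summable_p_mul q.2 _ K fun x => hK _ x.2
    have hinj : Function.Injective
        (fun z : {x : S' // Quotient.mk V.eqS x = Quotient.mk V.eqS t} × Rw' =>
          ((z.1.1, z.2) : S' × Rw')) := by
      intro z1 z2 hz
      obtain ⟨h1, h2⟩ := Prod.mk.injEq .. ▸ hz
      exact Prod.ext (Subtype.ext (by exact h1)) (by exact h2)
    have hsF2 : Summable (Function.uncurry
        fun (x : {x : S' // Quotient.mk V.eqS x = Quotient.mk V.eqS t}) (r : Rw') =>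
          M'.p x.1 r q.1.1 q.1.2 * u (Quotient.mk V.eqS t) r) :=
      hsM2.comp_injective hinj
    rw [← Summable.tsum_comm hsF2]
    refine tsum_congr fun r => ?_
    rw [tsum_mul_right, fiber_tsum M' V Q hQp q r t]
  rw [hre, Summable.tsum_sigma hsig, tsum_congr key]

include hrval hQadm hQp in
/-- Transport of expected one-step rewards along the quotient. -/
lemma rew_lift (q : M'.Pairs) :
    Q.rew (Quotient.mk V.eqS q.1.1) (Quotient.mk V.eqP q) = M'.rew q.1.1 q.1.2 := by
  unfold rew
  have : ∀ y : Quotient V.eqS × Rw',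
      Q.p y.1 y.2 (Quotient.mk V.eqS q.1.1) (Quotient.mk V.eqP q) * Q.rval y.2
        = Q.p y.1 y.2 (Quotient.mk V.eqS q.1.1) (Quotient.mk V.eqP q) * M'.rval y.2 :=
    fun y => by rw [hrval]
  rw [tsum_congr this,
    master M' V Q hQadm hQp q (fun _ r => M'.rval r) M'.Cb fun _ r => M'.abs_rval_le r]

include hQadm hQp in
/-- Transport of the transition kernel along the quotient. -/
lemma P_lift (q : M'.Pairs) (G : Quotient V.eqS → ℝ) (K : ℝ)
    (hK : ∀ Y, |G Y| ≤ K) :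
    ∑' Y : Quotient V.eqS,
        Q.P (Quotient.mk V.eqS q.1.1) (Quotient.mk V.eqP q) Y * G Y
      = ∑' x : S', M'.P q.1.1 q.1.2 x * G (Quotient.mk V.eqS x) := by
  have hadm_c : Quotient.mk V.eqP q ∈ Q.adm (Quotient.mk V.eqS q.1.1) :=
    (hQadm q _).2 rfl
  have hsQ : Summable fun y : Quotient V.eqS × Rw' =>
      Q.p y.1 y.2 (Quotient.mk V.eqS q.1.1) (Quotient.mk V.eqP q) * G y.1 :=
    Q.summable_p_mul hadm_c _ K fun y => hK y.1
  have hsM : Summable fun x : S' × Rw' =>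
      M'.p x.1 x.2 q.1.1 q.1.2 * G (Quotient.mk V.eqS x.1) :=
    M'.summable_p_mul q.2 _ K fun x => hK _
  have h1 : ∀ Y : Quotient V.eqS,
      Q.P (Quotient.mk V.eqS q.1.1) (Quotient.mk V.eqP q) Y * G Y
        = ∑' r : Rw',
            Q.p Y r (Quotient.mk V.eqS q.1.1) (Quotient.mk V.eqP q) * G Y := by
    intro Y
    rw [P, ← tsum_mul_right]
  have h2 : ∀ x : S',
      M'.P q.1.1 q.1.2 x * G (Quotient.mk V.eqS x)
        = ∑' r : Rw', M'.p x r q.1.1 q.1.2 * G (Quotient.mk V.eqS x) := by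
    intro x
    rw [P, ← tsum_mul_right]
  rw [tsum_congr h1, tsum_congr h2, ← Summable.tsum_prod hsQ, ← Summable.tsum_prod hsM]
  exact master M' V Q hQadm hQp q (fun Y _ => G Y) K fun Y _ => hK Y

end Quot

end MDP
namespace MDP

variable {S' A' Rw' : Type*} (M' : MDP S' A' Rw') (V : M'.VisibleSymmetry)
  (Q : MDP (Quotient V.eqS) (Quotient V.eqP) Rw')

section Quot2

variable
  (hrval : Q.rval = M'.rval)
  (hQadm : ∀ (q : M'.Pairs) (X : Quotient V.eqS),
      Quotient.mk V.eqP q ∈ Q.adm X ↔ Quotient.mk V.eqS q.1.1 = X)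
  (hQp : ∀ (q : M'.Pairs) (s' : S') (r : Rw'),
      Q.p (Quotient.mk V.eqS s') r (Quotient.mk V.eqS q.1.1) (Quotient.mk V.eqP q) =
        ∑' x : {x : S' // V.eqS.r x s'}, M'.p x.1 r q.1.1 q.1.2)

lemma mkP_eq_iff {p q : M'.Pairs} :
    Quotient.mk V.eqP p = Quotient.mk V.eqP q ↔ V.eqP.r p q :=
  ⟨Quotient.exact, Quotient.sound⟩

open Classical in
lemma N_eq_card (s' : S') {a : A'} (ha : a ∈ M'.adm s') :
    V.N s' a ha = ((M'.adm s').attach.filter (fun x =>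
      Quotient.mk V.eqP ⟨(s', x.1), x.2⟩ = Quotient.mk V.eqP ⟨(s', a), ha⟩)).card := by
  classical
  rw [VisibleSymmetry.N]
  have hset : {a' : A' | ∃ h' : a' ∈ M'.adm s', V.eqP.r ⟨(s', a), ha⟩ ⟨(s', a'), h'⟩}
      = ↑((M'.adm s').filter (fun a' => ∃ h' : a' ∈ M'.adm s',
          V.eqP.r ⟨(s', a), ha⟩ ⟨(s', a'), h'⟩)) := by
    ext a'
    constructor
    · rintro ⟨h', hr⟩
      exact Finset.mem_coe.2 (Finset.mem_filter.2 ⟨h', h', hr⟩)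
    · rintro hmem
      obtain ⟨-, h', hr⟩ := Finset.mem_filter.1 (Finset.mem_coe.1 hmem)
      exact ⟨h', hr⟩
  rw [hset, Set.ncard_coe_finset]
  refine Finset.card_bij (fun a' ha' => (⟨a', (Finset.mem_filter.1 ha').1⟩ :
      {x // x ∈ M'.adm s'})) ?_ ?_ ?_
  · intro a' ha'
    obtain ⟨hmem, h', hr⟩ := Finset.mem_filter.1 ha'
    refine Finset.mem_filter.2 ⟨Finset.mem_attach _ _, ?_⟩
    exact (mkP_eq_iff M' V).2 (V.eqP.symm hr)
  · intro a1 h1 a2 h2 heq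
    exact congrArg Subtype.val heq
  · intro x hx
    obtain ⟨-, heq⟩ := Finset.mem_filter.1 hx
    have hr := (mkP_eq_iff M' V).1 heq
    refine ⟨x.1, Finset.mem_filter.2 ⟨x.2, x.2, V.eqP.symm hr⟩, ?_⟩
    exact Subtype.ext rfl

open Classical in
lemma N_pos (s' : S') {a : A'} (ha : a ∈ M'.adm s') : 0 < V.N s' a ha := by
  rw [N_eq_card M' V s' ha]
  refine Finset.card_pos.2 ⟨⟨a, ha⟩, Finset.mem_filter.2 ⟨Finset.mem_attach _ _, rfl⟩⟩

include hQadm in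
open Classical in
lemma sum_lift (s' : S') (F : Quotient V.eqP → ℝ) :
    ∑ x ∈ (M'.adm s').attach,
        F (Quotient.mk V.eqP ⟨(s', x.1), x.2⟩) / (V.N s' x.1 x.2 : ℝ)
      = ∑ c ∈ Q.adm (Quotient.mk V.eqS s'), F c := by
  classical
  set g : {x // x ∈ M'.adm s'} → Quotient V.eqP :=
    fun x => Quotient.mk V.eqP ⟨(s', x.1), x.2⟩ with hg
  have hmem : ∀ x : {x // x ∈ M'.adm s'}, g x ∈ Q.adm (Quotient.mk V.eqS s') :=
    fun x => (hQadm ⟨(s', x.1), x.2⟩ _).2 rfl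
  have hfw := Finset.sum_fiberwise_eq_sum_filter (M'.adm s').attach
    (Q.adm (Quotient.mk V.eqS s')) g
    (fun x => F (g x) / (V.N s' x.1 x.2 : ℝ))
  rw [Finset.filter_true_of_mem (fun x _ => hmem x)] at hfw
  rw [← hfw]
  refine Finset.sum_congr rfl fun c hc => ?_
  obtain ⟨q, rfl⟩ := Quotient.exists_rep c
  have hq : V.eqS.r q.1.1 s' := (mkS_eq_iff M' V).1 ((hQadm q _).1 hc)
  obtain ⟨a2, h2, hrel⟩ := V.lift_action q s' hq
  have hfib_mem : (⟨a2, h2⟩ : {x // x ∈ M'.adm s'}) ∈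
      (M'.adm s').attach.filter (fun x => g x = Quotient.mk V.eqP q) :=
    Finset.mem_filter.2 ⟨Finset.mem_attach _ _,
      (mkP_eq_iff M' V).2 (V.eqP.symm hrel)⟩
  set m := ((M'.adm s').attach.filter (fun x => g x = Quotient.mk V.eqP q)).card
    with hm
  have hm_pos : 0 < m := Finset.card_pos.2 ⟨_, hfib_mem⟩
  have hNx : ∀ x ∈ (M'.adm s').attach.filter (fun x => g x = Quotient.mk V.eqP q),
      V.N s' x.1 x.2 = m := by
    intro x hx
    have hgx : g x = Quotient.mk V.eqP q := (Finset.mem_filter.1 hx).2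
    rw [N_eq_card M' V s' x.2, hm]
    congr 1
    refine Finset.filter_congr fun y _ => ?_
    show g y = g x ↔ g y = Quotient.mk V.eqP q
    rw [hgx]
  calc ∑ x ∈ (M'.adm s').attach.filter (fun x => g x = Quotient.mk V.eqP q),
        F (g x) / (V.N s' x.1 x.2 : ℝ)
      = ∑ _x ∈ (M'.adm s').attach.filter (fun x => g x = Quotient.mk V.eqP q),
        F (Quotient.mk V.eqP q) / (m : ℝ) := by
        refine Finset.sum_congr rfl fun x hx => ?_
        rw [(Finset.mem_filter.1 hx).2, hNx x hx]
    _ = m • (F (Quotient.mk V.eqP q) / (m : ℝ)) := by rw [Finset.sum_const]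
    _ = F (Quotient.mk V.eqP q) := by
        rw [nsmul_eq_mul, mul_div_cancel₀]
        exact Nat.cast_ne_zero.2 hm_pos.ne'

open Classical in
/-- The pullback of a quotient policy to the original MDP. -/
noncomputable def liftPol (ρ : Quotient V.eqS → Quotient V.eqP → ℝ) :
    S' → A' → ℝ := fun t a' =>
  if h : a' ∈ M'.adm t then
    ρ (Quotient.mk V.eqS t) (Quotient.mk V.eqP ⟨(t, a'), h⟩) / (V.N t a' h : ℝ)
  else 0

lemma liftPol_pos {ρ : Quotient V.eqS → Quotient V.eqP → ℝ} {t : S'} {a' : A'}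
    (h : a' ∈ M'.adm t) : M'.liftPol V ρ t a'
      = ρ (Quotient.mk V.eqS t) (Quotient.mk V.eqP ⟨(t, a'), h⟩) / (V.N t a' h : ℝ) := by
  unfold liftPol
  rw [dif_pos h]

include hQadm in
lemma lift_isPolicy {ρ : Quotient V.eqS → Quotient V.eqP → ℝ}
    (hρ : Q.IsPolicy ρ) : M'.IsPolicy (M'.liftPol V ρ) := by
  refine ⟨fun t a' => ?_, fun t a' h => by unfold liftPol; rw [dif_neg h], fun t => ?_⟩
  · unfold liftPol
    split
    · exact div_nonneg (hρ.1 _ _) (Nat.cast_nonneg _)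
    · rfl
  · rw [← Finset.sum_attach (M'.adm t) (fun a' => M'.liftPol V ρ t a')]
    rw [Finset.sum_congr rfl (fun x _ => M'.liftPol_pos V x.2)]
    rw [sum_lift M' V Q hQadm t (fun c => ρ (Quotient.mk V.eqS t) c)]
    exact hρ.2.2 _

include hrval hQadm hQp in
lemma stepReward_lift {ρ : Quotient V.eqS → Quotient V.eqP → ℝ}
    (hρ : Q.IsPolicy ρ) :
    ∀ (k : ℕ) (t : S'), M'.stepReward (M'.liftPol V ρ) k t
      = Q.stepReward ρ k (Quotient.mk V.eqS t) := by
  intro k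
  induction k with
  | zero =>
    intro t
    rw [stepReward_zero, stepReward_zero,
      ← Finset.sum_attach (M'.adm t)
        (fun a' => M'.liftPol V ρ t a' * M'.rew t a'),
      ← sum_lift M' V Q hQadm t
        (fun c => ρ (Quotient.mk V.eqS t) c * Q.rew (Quotient.mk V.eqS t) c)]
    refine Finset.sum_congr rfl fun x _ => ?_
    rw [M'.liftPol_pos V x.2,
      show Q.rew (Quotient.mk V.eqS t) (Quotient.mk V.eqP ⟨(t, x.1), x.2⟩)
        = M'.rew t x.1 from rew_lift M' V Q hrval hQadm hQp ⟨(t, x.1), x.2⟩]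
    rw [div_mul_eq_mul_div]
  | succ k ih =>
    intro t
    rw [stepReward_succ, stepReward_succ,
      ← Finset.sum_attach (M'.adm t)
        (fun a' => M'.liftPol V ρ t a' *
          ∑' s', M'.P t a' s' * M'.stepReward (M'.liftPol V ρ) k s'),
      ← sum_lift M' V Q hQadm t
        (fun c => ρ (Quotient.mk V.eqS t) c *
          ∑' Y, Q.P (Quotient.mk V.eqS t) c Y * Q.stepReward ρ k Y)]
    refine Finset.sum_congr rfl fun x _ => ?_
    rw [M'.liftPol_pos V x.2]
    have hG : ∀ Y : Quotient V.eqS, |Q.stepReward ρ k Y| ≤ Q.Cb :=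
      fun Y => Q.abs_stepReward_le hρ k Y
    have hinner : ∑' s', M'.P t x.1 s' * M'.stepReward (M'.liftPol V ρ) k s'
        = ∑' Y, Q.P (Quotient.mk V.eqS t) (Quotient.mk V.eqP ⟨(t, x.1), x.2⟩) Y *
            Q.stepReward ρ k Y := by
      rw [tsum_congr fun s' => by rw [ih s']]
      exact (P_lift M' V Q hQadm hQp ⟨(t, x.1), x.2⟩ (Q.stepReward ρ k) Q.Cb hG).symm
    rw [hinner, div_mul_eq_mul_div]

include hrval hQadm hQp in
lemma value_lift {γ : ℝ} {ρ : Quotient V.eqS → Quotient V.eqP → ℝ}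
    (hρ : Q.IsPolicy ρ) (t : S') :
    M'.value γ (M'.liftPol V ρ) t = Q.value γ ρ (Quotient.mk V.eqS t) := by
  unfold value
  exact tsum_congr fun k => by
    rw [stepReward_lift M' V Q hrval hQadm hQp hρ k t]

include hrval hQadm hQp in
lemma optValue_lift {γ : ℝ} (hγ0 : 0 ≤ γ) (hγ1 : γ < 1) (t : S') :
    M'.optValue γ t = Q.optValue γ (Quotient.mk V.eqS t) := by
  classical
  obtain ⟨πgM, hpgM, _⟩ := M'.exists_greedy hγ0 hγ1
  obtain ⟨πgQ, hpgQ, _⟩ := Q.exists_greedy hγ0 hγ1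
  haveI : Nonempty {π : S' → A' → ℝ // M'.IsPolicy π} := ⟨⟨πgM, hpgM⟩⟩
  haveI : Nonempty {π : Quotient V.eqS → Quotient V.eqP → ℝ // Q.IsPolicy π} :=
    ⟨⟨πgQ, hpgQ⟩⟩
  have hbM : BddAbove (Set.range fun π : {π : S' → A' → ℝ // M'.IsPolicy π} =>
      M'.value γ π.1 t) := by
    refine ⟨M'.Vb γ, ?_⟩; rintro x ⟨π, rfl⟩
    exact (abs_le.1 (M'.abs_value_le hγ0 hγ1 π.2 t)).2
  have hbQ : BddAbove (Set.range
      fun π : {π : Quotient V.eqS → Quotient V.eqP → ℝ // Q.IsPolicy π} =>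
      Q.value γ π.1 (Quotient.mk V.eqS t)) := by
    refine ⟨Q.Vb γ, ?_⟩; rintro x ⟨π, rfl⟩
    exact (abs_le.1 (Q.abs_value_le hγ0 hγ1 π.2 _)).2
  refine le_antisymm ?_ ?_
  · -- every M'-policy is dominated by the quotient optimal value
    refine ciSup_le fun μp => ?_
    obtain ⟨μ, hμ⟩ := μp
    refine M'.value_le_of_bellman_le hγ0 hγ1 hμ
      (fun t' => Q.optValue γ (Quotient.mk V.eqS t')) (Q.Vb γ)
      (fun t' => Q.abs_optValue_le hγ0 hγ1 _) (fun t' => ?_) t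
    refine M'.sum_pol_le hμ t' _ _ fun a ha => ?_
    have heq1 : M'.rew t' a = Q.rew (Quotient.mk V.eqS t')
        (Quotient.mk V.eqP ⟨(t', a), ha⟩) :=
      (rew_lift M' V Q hrval hQadm hQp ⟨(t', a), ha⟩).symm
    have heq2 : ∑' s', M'.P t' a s' * Q.optValue γ (Quotient.mk V.eqS s')
        = ∑' Y, Q.P (Quotient.mk V.eqS t') (Quotient.mk V.eqP ⟨(t', a), ha⟩) Y *
            Q.optValue γ Y :=
      (P_lift M' V Q hQadm hQp ⟨(t', a), ha⟩ (Q.optValue γ) (Q.Vb γ)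
        (fun Y => Q.abs_optValue_le hγ0 hγ1 Y)).symm
    rw [heq1, heq2]
    exact Q.bellman_opt hγ0 hγ1 ((hQadm ⟨(t', a), ha⟩ _).2 rfl)
  · refine ciSup_le fun ρp => ?_
    obtain ⟨ρ, hρ⟩ := ρp
    have := value_lift M' V Q hrval hQadm hQp hρ (γ := γ) t
    calc Q.value γ ρ (Quotient.mk V.eqS t) = M'.value γ (M'.liftPol V ρ) t :=
          this.symm
      _ ≤ M'.optValue γ t :=
          le_ciSup hbM ⟨M'.liftPol V ρ, lift_isPolicy M' V Q hQadm hρ⟩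

include hrval hQadm hQp in
lemma isOptimal_lift {γ : ℝ} (hγ0 : 0 ≤ γ) (hγ1 : γ < 1)
    {ρ : Quotient V.eqS → Quotient V.eqP → ℝ}
    (hρ : Q.IsOptimal γ ρ) : M'.IsOptimal γ (M'.liftPol V ρ) := by
  refine ⟨lift_isPolicy M' V Q hQadm hρ.1, fun t => ?_⟩
  rw [value_lift M' V Q hrval hQadm hQp hρ.1 t, hρ.2 (Quotient.mk V.eqS t),
    optValue_lift M' V Q hrval hQadm hQp hγ0 hγ1 t]

end Quot2

end MDP
namespace MDP

lemma N_eq_one_of_simple {S' A' Rw' : Type*} (M' : MDP S' A' Rw')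
    (V : M'.VisibleSymmetry) (hs : V.Simple) (s' : S') {a : A'}
    (ha : a ∈ M'.adm s') : V.N s' a ha = 1 := by
  rw [VisibleSymmetry.N]
  have : {a' : A' | ∃ h' : a' ∈ M'.adm s', V.eqP.r ⟨(s', a), ha⟩ ⟨(s', a'), h'⟩}
      = {a} := by
    ext a'
    constructor
    · rintro ⟨h', hr⟩
      have := hs _ _ hr
      exact (by exact this.symm : a' = a)
    · rintro rfl
      exact ⟨ha, V.eqP.refl _⟩
  rw [this, Set.ncard_singleton]

end MDP
/-- Let `M`, `M̃`, `M'` be MDPs with the same discount factor `γ ∈ [0,1)`,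
where `M̃` is a relabeled variant of `M` via `h = (f, {g_s})`, `M̃` and `M'` have the same
transition structure and the same optimal policies, and `~` is a visible symmetry `V` of
`M'` (so `(M', ~)` is a hidden symmetry of `M`); let `Q = M'/~` be the quotient MDP.
For a policy `π` in `M'/~` the pullback `π'(s,a) = π([(f s, g_s a)]_{Ψ'}) / N_{Ψ'}(f s, g_s a)`
(extended by `0` off admissible pairs) is a policy in `M`; if `π` is optimal in `M'/~` then
`π'` is optimal in `M`; and if `~` is simple then `π'(s,a) = π(g_s(a) | [f s])`. -/
theorem hiddenSymmetry_pullback_optimal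
    {S A S' A' Rw Rw' : Type*} [Countable S] [Countable S'] [Countable Rw] [Countable Rw']
    (M : MDP S A Rw) (Mt : MDP S' A' Rw) (M' : MDP S' A' Rw')
    (γ : ℝ) (hγ0 : 0 ≤ γ) (hγ1 : γ < 1)
    (h : M.Relabeling Mt)
    (hadm : Mt.adm = M'.adm)
    (htrans : ∀ (s : S') (a : A'), a ∈ Mt.adm s → ∀ s' : S',
      (∑' r : Rw, Mt.p s' r s a) = ∑' r : Rw', M'.p s' r s a)
    (hopt : ∀ π : S' → A' → ℝ, Mt.IsOptimal γ π ↔ M'.IsOptimal γ π)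
    (hg : ∀ (s : S) (a : A), a ∈ M.adm s → h.g s a ∈ M'.adm (h.f s))
    (V : M'.VisibleSymmetry)
    (Q : MDP (Quotient V.eqS) (Quotient V.eqP) Rw')
    (hrval : Q.rval = M'.rval)
    (hQadm : ∀ (q : M'.Pairs) (X : Quotient V.eqS),
      Quotient.mk V.eqP q ∈ Q.adm X ↔ Quotient.mk V.eqS q.1.1 = X)
    (hQp : ∀ (q : M'.Pairs) (s' : S') (r : Rw'),
      Q.p (Quotient.mk V.eqS s') r (Quotient.mk V.eqS q.1.1) (Quotient.mk V.eqP q) =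
        ∑' x : {x : S' // V.eqS.r x s'}, M'.p x.1 r q.1.1 q.1.2)
    (π : Quotient V.eqS → Quotient V.eqP → ℝ) (hπ : Q.IsPolicy π)
    (π' : S → A → ℝ)
    (hπ'adm : ∀ (s : S) (a : A) (ha : a ∈ M.adm s),
      π' s a = π (Quotient.mk V.eqS (h.f s))
          (Quotient.mk V.eqP ⟨(h.f s, h.g s a), hg s a ha⟩) /
        (V.N (h.f s) (h.g s a) (hg s a ha) : ℝ))
    (hπ'nadm : ∀ (s : S) (a : A), a ∉ M.adm s → π' s a = 0) :
    M.IsPolicy π' ∧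
      (Q.IsOptimal γ π → M.IsOptimal γ π') ∧
      (V.Simple → ∀ (s : S) (a : A) (ha : a ∈ M.adm s),
        π' s a = π (Quotient.mk V.eqS (h.f s))
          (Quotient.mk V.eqP ⟨(h.f s, h.g s a), hg s a ha⟩)) := by
  classical
  set π'' : S' → A' → ℝ := M'.liftPol V π with hπ''
  have hπ''M' : M'.IsPolicy π'' := MDP.lift_isPolicy M' V Q hQadm hπ
  have hσ : ∀ (s : S) (a : A), a ∈ M.adm s → π' s a = π'' (h.f s) (h.g s a) := by
    intro s a ha
    rw [hπ'adm s a ha, hπ'', M'.liftPol_pos V (hg s a ha)]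
  have hMtpol : Mt.IsPolicy π'' := by
    unfold MDP.IsPolicy at hπ''M' ⊢
    rw [hadm]
    exact hπ''M'
  refine ⟨M.relabel_policy Mt h hMtpol hσ hπ'nadm, fun hQopt => ?_, fun hsimp s a ha => ?_⟩
  · have hM'opt : M'.IsOptimal γ π'' :=
      MDP.isOptimal_lift M' V Q hrval hQadm hQp hγ0 hγ1 hQopt
    have hMtopt : Mt.IsOptimal γ π'' := (hopt π'').2 hM'opt
    exact M.relabel_isOptimal Mt h hγ0 hγ1 hσ hπ'nadm hMtopt
  · rw [hπ'adm s a ha, MDP.N_eq_one_of_simple M' V hsimp (h.f s) (hg s a ha)]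
    rw [Nat.cast_one, div_one]
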